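/- Any two sign assignments on the Cayley graph of S_n are gauge equivalent: if S₁ and S₂ are two functions from edges of the Cayley graph of S_n (generated by adjacent transpositions) to {±1}, both satisfying the square rule (product -1 around each 4-cycle from commuting generators) and the hexagon rule (product +1 around each 6-cycle from braid relations), then there is a function f : S_n → {±1} with S₁(e) = f(σ)·f(σ')·S₂(e) for every edge e joining σ and σ'. -/

import Mathlib

/-- The adjacent transposition `τ_i = (i, i+1)` in the symmetric group on `{0,…,n-1}`. -/
def adjSwap (n : ℕ) (i : ℕ) (h : i + 1 < n) : Equiv.Perm (Fin n) :=
  Equiv.swap ⟨i, Nat.lt_of_succ_lt h⟩ ⟨i + 1, h⟩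

/-- A sign assignment on the Cayley graph of `S_n` (with respect to the adjacent
transpositions): a `{±1}`-valued function on edges (encoded as a function of the
initial vertex `σ` and the generator index `i`, well-defined on undirected edges)
satisfying the square rule (product `-1` around each 4-cycle coming from commuting
generators) and the hexagon rule (product `+1` around each 6-cycle coming from
braid relations). -/
def IsCayleySign (n : ℕ)
    (S : Equiv.Perm (Fin n) → (i : ℕ) → i + 1 < n → ℤˣ) : Prop :=
  (∀ (σ : Equiv.Perm (Fin n)) (i : ℕ) (hi : i + 1 < n),
      S (σ * adjSwap n i hi) i hi = S σ i hi) ∧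
  (∀ (σ : Equiv.Perm (Fin n)) (i j : ℕ) (hi : i + 1 < n) (hj : j + 1 < n),
      i + 1 < j →
      S σ i hi * S (σ * adjSwap n i hi) j hj
        * S (σ * adjSwap n j hj) i hi * S σ j hj = -1) ∧
  (∀ (σ : Equiv.Perm (Fin n)) (i : ℕ) (hi : i + 1 + 1 < n),
      S σ i (Nat.lt_of_succ_lt hi)
        * S (σ * adjSwap n i (Nat.lt_of_succ_lt hi)) (i + 1) hi
        * S (σ * adjSwap n i (Nat.lt_of_succ_lt hi) * adjSwap n (i+1) hi) i
            (Nat.lt_of_succ_lt hi)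
        * S (σ * adjSwap n i (Nat.lt_of_succ_lt hi) * adjSwap n (i+1) hi
            * adjSwap n i (Nat.lt_of_succ_lt hi)) (i + 1) hi
        * S (σ * adjSwap n (i+1) hi * adjSwap n i (Nat.lt_of_succ_lt hi)) i
            (Nat.lt_of_succ_lt hi)
        * S (σ * adjSwap n (i+1) hi) (i + 1) hi = 1)

namespace CayleyAux

/-- Coxeter-type relators for the symmetric group presentation. -/
def csRels (m : ℕ) : Set (FreeGroup (Fin m)) :=
  {r | (∃ i : Fin m, r = .of i * .of i) ∨
       (∃ i j : Fin m, (i : ℕ) + 1 < (j : ℕ) ∧ r = (.of i * .of j) ^ 2) ∨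
       (∃ i j : Fin m, (i : ℕ) + 1 = (j : ℕ) ∧ r = (.of i * .of j) ^ 3)}

abbrev QG (m : ℕ) := PresentedGroup (csRels m)

lemma relOne {m : ℕ} {r : FreeGroup (Fin m)} (hr : r ∈ csRels m) :
    PresentedGroup.mk (csRels m) r = 1 :=
  (QuotientGroup.eq_one_iff r).mpr (Subgroup.subset_normalClosure hr)

/-- total generator family -/
noncomputable def g (m : ℕ) (i : ℕ) : QG m :=
  if h : i < m then PresentedGroup.of ⟨i, h⟩ else 1

lemma comm_of_sq {G : Type*} [Group G] {a b : G} (ha : a * a = 1) (hb : b * b = 1)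
    (h : (a * b) ^ 2 = 1) : a * b = b * a := by
  have ha' : a⁻¹ = a := inv_eq_of_mul_eq_one_right ha
  have hb' : b⁻¹ = b := inv_eq_of_mul_eq_one_right hb
  have : a * b = (a * b)⁻¹ := (inv_eq_of_mul_eq_one_right (by rw [← pow_two]; exact h)).symm
  rw [this, mul_inv_rev, ha', hb']

lemma braid_of_cube {G : Type*} [Group G] {a b : G} (ha : a * a = 1) (hb : b * b = 1)
    (h : (a * b) ^ 3 = 1) : a * b * a = b * a * b := by
  have ha' : a⁻¹ = a := inv_eq_of_mul_eq_one_right ha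
  have hb' : b⁻¹ = b := inv_eq_of_mul_eq_one_right hb
  have h2 : (a * b) * (a * b) * (a * b) = 1 := by
    have := h; rwa [pow_succ, pow_succ, pow_one] at this
  have : (a * b) * (a * b) = (a * b)⁻¹ := by
    rw [eq_inv_iff_mul_eq_one]; exact h2
  rw [mul_inv_rev, ha', hb'] at this
  have key : a * b * a = (a * b) * (a * b) * b := by
    rw [mul_assoc (a*b) (a*b) b, mul_assoc a b b, hb, mul_one]
  rw [key, this]

lemma sq_of_comm {G : Type*} [Group G] {a b : G} (ha : a * a = 1) (hb : b * b = 1)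
    (h : a * b = b * a) : (a * b) ^ 2 = 1 := by
  rw [pow_two, mul_assoc, ← mul_assoc b a b, ← h, mul_assoc, hb, mul_one, ha]

lemma cube_of_braid {G : Type*} [Group G] {a b : G} (ha : a * a = 1) (hb : b * b = 1)
    (h : a * b * a = b * a * b) : (a * b) ^ 3 = 1 := by
  have : (a * b) ^ 3 = (a * b * a) * (b * a * b) := by
    rw [pow_succ, pow_succ, pow_one]; group
  rw [this, ← h]
  calc a * b * a * (a * b * a) = a * (b * ((a * a) * (b * a))) := by group
    _ = 1 := by rw [ha, one_mul, ← mul_assoc, ← mul_assoc, mul_assoc a b b, hb, mul_one, ha]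

lemma g_sq {m : ℕ} (i : ℕ) : g m i * g m i = 1 := by
  unfold g
  split
  · have := relOne (m := m) (r := .of ⟨i, by assumption⟩ * .of ⟨i, by assumption⟩)
      (Or.inl ⟨_, rfl⟩)
    simpa [PresentedGroup.of, map_mul] using this
  · simp

lemma g_comm {m : ℕ} {i j : ℕ} (hij : i + 1 < j) : g m i * g m j = g m j * g m i := by
  by_cases hj : j < m
  · have hi : i < m := by omega
    have h2 := relOne (m := m) (r := (.of ⟨i, hi⟩ * .of ⟨j, hj⟩) ^ 2)
      (Or.inr (Or.inl ⟨⟨i, hi⟩, ⟨j, hj⟩, hij, rfl⟩))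
    have h2' : (g m i * g m j) ^ 2 = 1 := by
      unfold g; rw [dif_pos hi, dif_pos hj]
      simpa [PresentedGroup.of, map_mul, map_pow] using h2
    exact comm_of_sq (g_sq i) (g_sq j) h2'
  · have : g m j = 1 := by unfold g; rw [dif_neg hj]
    rw [this, mul_one, one_mul]

lemma g_braid {m : ℕ} {i : ℕ} (h : i + 1 < m) :
    g m i * g m (i+1) * g m i = g m (i+1) * g m i * g m (i+1) := by
  have hi : i < m := by omega
  have h3 := relOne (m := m) (r := (.of ⟨i, hi⟩ * .of ⟨i+1, h⟩) ^ 3)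
    (Or.inr (Or.inr ⟨⟨i, hi⟩, ⟨i+1, h⟩, rfl, rfl⟩))
  have h3' : (g m i * g m (i+1)) ^ 3 = 1 := by
    unfold g; rw [dif_pos hi, dif_pos h]
    simpa [PresentedGroup.of, map_mul, map_pow] using h3
  exact braid_of_cube (g_sq i) (g_sq (i+1)) h3'

end CayleyAux

namespace CayleyAux

/-- descending partial products `g (M-1) * g (M-2) * ⋯ * g (M-t)` -/
noncomputable def d (M : ℕ) : ℕ → QG M
  | 0 => 1
  | (j+1) => d M j * g M (M - 1 - j)

/-- coset representative `c k = g (M-1) * ⋯ * g k` -/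
noncomputable def c (M k : ℕ) : QG M := d M (M - k)

lemma c_ge {M k : ℕ} (h : M ≤ k) : c M k = 1 := by
  unfold c; rw [Nat.sub_eq_zero_of_le h]; rfl

lemma c_succ {M k : ℕ} (h : k < M) : c M k = c M (k+1) * g M k := by
  unfold c
  have h1 : M - k = (M - (k+1)) + 1 := by omega
  rw [h1, d]
  congr 2
  omega

lemma g_d_comm {M : ℕ} : ∀ (t j : ℕ), j + t + 2 ≤ M → g M j * d M t = d M t * g M j := by
  intro t
  induction t with
  | zero => intro j _; simp [d]
  | succ t ih =>
      intro j hj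
      rw [d, ← mul_assoc, ih j (by omega), mul_assoc,
        g_comm (show j + 1 < M - 1 - t by omega), ← mul_assoc]

lemma g_c_comm {M j k : ℕ} (h : j + 2 ≤ k) : g M j * c M k = c M k * g M j := by
  by_cases hk : k ≤ M
  · exact g_d_comm (M - k) j (by omega)
  · rw [c_ge (by omega)]; simp

lemma c_mul_g_self {M k : ℕ} (h : k < M) : c M k * g M k = c M (k+1) := by
  rw [c_succ h, mul_assoc, g_sq, mul_one]

lemma c_g_gt {M : ℕ} : ∀ (t k j : ℕ), k + t + 1 = j → j < M →
    c M k * g M j = g M (j-1) * c M k := by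
  intro t
  induction t with
  | zero =>
      intro k j hkj hj
      have hjk : j = k + 1 := by omega
      subst hjk
      have hk : k < M := by omega
      have e1 : c M k * g M (k+1)
          = c M (k+2) * (g M (k+1) * g M k * g M (k+1)) := by
        rw [c_succ hk, c_succ hj]; group
      rw [e1, ← g_braid hj]
      have comm2 : c M (k+2) * g M k = g M k * c M (k+2) :=
        (g_c_comm (by omega)).symm
      have e2 : c M (k+2) * (g M k * g M (k+1) * g M k)
          = (c M (k+2) * g M k) * g M (k+1) * g M k := by group
      rw [e2, comm2, mul_assoc (g M k), ← c_succ hj, mul_assoc, ← c_succ hk]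
      norm_num
  | succ t ih =>
      intro k j hkj hj
      have hk : k < M := by omega
      rw [c_succ hk, mul_assoc, g_comm (show k + 1 < j by omega), ← mul_assoc,
        ih (k+1) j (by omega) hj, mul_assoc, ← c_succ hk]

/-- inclusion of presented groups -/
noncomputable def θ (m : ℕ) : QG m →* QG (m+1) :=
  PresentedGroup.toGroup (f := fun i : Fin m => g (m+1) (i : ℕ)) (by
    rintro r (⟨i, rfl⟩ | ⟨i, j, hij, rfl⟩ | ⟨i, j, hij, rfl⟩)
    · simpa using g_sq (m := m+1) (i : ℕ)
    · simpa using sq_of_comm (g_sq _) (g_sq _) (g_comm hij)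
    · have hb : (i : ℕ) + 1 < m + 1 := by omega
      have := cube_of_braid (g_sq (m := m+1) (i : ℕ)) (g_sq ((i : ℕ)+1)) (g_braid hb)
      rw [hij] at this
      simpa using this)

lemma θ_of {m : ℕ} (i : Fin m) : θ m (PresentedGroup.of i) = g (m+1) (i : ℕ) :=
  PresentedGroup.toGroup.of _

lemma exists_word (m : ℕ) (x : QG m) : ∃ lw : List ℕ, x = (lw.map (g m)).prod := by
  refine PresentedGroup.induction_on (C := fun x => ∃ lw, x = (List.map (g m) lw).prod) x ?_
  intro z
  induction z using FreeGroup.induction_on with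
  | C1 => exact ⟨[], by simp⟩
  | of i =>
      refine ⟨[(i : ℕ)], ?_⟩
      simp only [List.map_cons, List.map_nil, List.prod_cons, List.prod_nil, mul_one]
      rw [g, dif_pos i.isLt]
      rfl
  | inv_of i _ =>
      refine ⟨[(i : ℕ)], ?_⟩
      simp only [List.map_cons, List.map_nil, List.prod_cons, List.prod_nil, mul_one, map_inv]
      have h1 : (PresentedGroup.mk (csRels m)) (FreeGroup.of i) = g m (i : ℕ) := by
        rw [g, dif_pos i.isLt]; rfl
      rw [h1, inv_eq_of_mul_eq_one_right (g_sq (i : ℕ))]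
  | mul y z hy hz =>
      obtain ⟨ly, hy⟩ := hy
      obtain ⟨lz, hz⟩ := hz
      exact ⟨ly ++ lz, by rw [map_mul, hy, hz, List.map_append, List.prod_append]⟩

theorem covers : ∀ m, ∃ l : List (QG m), (∀ x, x ∈ l) ∧ l.length ≤ (m+1).factorial := by
  intro m
  induction m with
  | zero =>
      refine ⟨[1], fun x => ?_, by simp⟩
      obtain ⟨lw, rfl⟩ := exists_word 0 x
      have : ∀ y ∈ lw.map (g 0), y = 1 := by
        intro y hy
        obtain ⟨i, _, rfl⟩ := List.mem_map.mp hy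
        rw [g, dif_neg (by omega)]
      rw [List.prod_eq_one this]
      simp
  | succ m ih =>
      obtain ⟨l, hl, hlen⟩ := ih
      set M := m + 1 with hM
      refine ⟨l.flatMap (fun hh => (List.range (M+1)).map (fun k => θ m hh * c M k)),
        ?_, ?_⟩
      · set L := l.flatMap (fun hh => (List.range (M+1)).map (fun k => θ m hh * c M k)) with hL
        have memL : ∀ x : QG M, (∃ hh, ∃ k, k ≤ M ∧ x = θ m hh * c M k) → x ∈ L := by
          rintro x ⟨hh, k, hk, rfl⟩
          exact List.mem_flatMap.mpr ⟨hh, hl hh,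
            List.mem_map.mpr ⟨k, List.mem_range.mpr (by omega), rfl⟩⟩
        have base : (1 : QG M) ∈ L := by
          refine memL 1 ⟨1, M, le_refl _, ?_⟩
          rw [map_one, c_ge (le_refl M), mul_one]
        have step : ∀ x : QG M, x ∈ L → ∀ i : ℕ, x * g M i ∈ L := by
          intro x hx i
          obtain ⟨hh, _, hmem⟩ := List.mem_flatMap.mp hx
          obtain ⟨k, hkr, rfl⟩ := List.mem_map.mp hmem
          have hk : k < M + 1 := List.mem_range.mp hkr
          by_cases hiM : i < M
          · rcases Nat.lt_trichotomy (i+1) k with hlt | heq | hgt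
            · -- i + 1 < k : commute past
              have him : i < m := by omega
              refine memL _ ⟨hh * PresentedGroup.of ⟨i, him⟩, k, by omega, ?_⟩
              rw [map_mul, θ_of, mul_assoc, mul_assoc]
              congr 1
              exact (g_c_comm (by omega)).symm
            · -- i + 1 = k
              refine memL _ ⟨hh, i, by omega, ?_⟩
              have hcg : c M k * g M i = c M i := by
                rw [← heq]; exact (c_succ (by omega)).symm
              rw [mul_assoc, hcg]
            · rcases Nat.eq_or_lt_of_le (show k ≤ i by omega) with heq2 | hlt2
              · -- i = k
                subst heq2
                refine memL _ ⟨hh, k+1, by omega, ?_⟩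
                rw [mul_assoc, c_mul_g_self (by omega)]
              · -- k < i : slide a smaller generator out
                have him : i - 1 < m := by omega
                refine memL _ ⟨hh * PresentedGroup.of ⟨i-1, him⟩, k, by omega, ?_⟩
                rw [map_mul, θ_of, mul_assoc, mul_assoc]
                congr 1
                exact c_g_gt (i - k - 1) k i (by omega) hiM
          · rw [g, dif_neg (by omega), mul_one]
            exact hx
        have cover : ∀ lw : List ℕ, (lw.map (g M)).prod ∈ L := by
          intro lw
          induction lw using List.reverseRecOn with
          | nil => simpa using base
          | append_singleton lw i ihw =>
              rw [List.map_append, List.prod_append]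
              simpa using step _ ihw i
        intro x
        obtain ⟨lw, rfl⟩ := exists_word M x
        exact cover lw
      · rw [List.length_flatMap]
        have hsum : (List.map (List.length ∘ fun hh => (List.range (M+1)).map
            (fun k => θ m hh * c M k)) l).sum = l.length * (M+1) := by
          rw [List.map_congr_left (f := (List.length ∘ fun hh => (List.range (M+1)).map
              (fun k => θ m hh * c M k))) (g := fun _ => M + 1) (by intro a _; simp),
            List.map_const', List.sum_replicate, smul_eq_mul]
        refine hsum.trans_le ?_
        calc l.length * (M+1) ≤ M.factorial * (M+1) := Nat.mul_le_mul_right _ hlen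
          _ = (M+1).factorial := by rw [Nat.factorial_succ M, Nat.mul_comm]

end CayleyAux

namespace CayleyAux

/-- total version of `adjSwap` -/
noncomputable def τ (n : ℕ) (i : ℕ) : Equiv.Perm (Fin n) :=
  if h : i + 1 < n then adjSwap n i h else 1

lemma τ_pos {n i : ℕ} (h : i + 1 < n) : τ n i = adjSwap n i h := dif_pos h

lemma τ_sq (n i : ℕ) : τ n i * τ n i = 1 := by
  unfold τ
  split
  · exact Equiv.swap_mul_self _ _
  · simp

lemma τ_comm {n i j : ℕ} (hij : i + 1 < j) : τ n i * τ n j = τ n j * τ n i := by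
  by_cases hj : j + 1 < n
  · have hi : i + 1 < n := by omega
    rw [τ_pos hi, τ_pos hj]
    unfold adjSwap
    have hd : (Equiv.swap (⟨i, by omega⟩ : Fin n) ⟨i+1, hi⟩).Disjoint
        (Equiv.swap (⟨j, by omega⟩ : Fin n) ⟨j+1, hj⟩) := by
      intro x
      by_cases hx : x = (⟨i, by omega⟩ : Fin n) ∨ x = (⟨i+1, hi⟩ : Fin n)
      · right
        apply Equiv.swap_apply_of_ne_of_ne <;>
          (rcases hx with rfl | rfl <;> simp [Fin.ext_iff] <;> omega)
      · left
        push_neg at hx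
        exact Equiv.swap_apply_of_ne_of_ne hx.1 hx.2
    exact hd.commute.eq
  · have : τ n j = 1 := dif_neg hj
    rw [this, mul_one, one_mul]

lemma τ_braid {n i : ℕ} (h : i + 1 + 1 < n) :
    τ n i * τ n (i+1) * τ n i = τ n (i+1) * τ n i * τ n (i+1) := by
  have hi : i + 1 < n := by omega
  rw [τ_pos hi, τ_pos h]
  unfold adjSwap
  set a : Fin n := ⟨i, by omega⟩
  set b : Fin n := ⟨i+1, by omega⟩
  set cc : Fin n := ⟨i+2, by omega⟩
  have hab : a ≠ b := by simp [a, b, Fin.ext_iff]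
  have hbc : b ≠ cc := by simp [b, cc, Fin.ext_iff]
  have hac : a ≠ cc := by simp [a, cc, Fin.ext_iff]
  have e1 : Equiv.swap a b * Equiv.swap b cc * Equiv.swap a b = Equiv.swap b a *
      Equiv.swap cc b * Equiv.swap b a := by
    rw [Equiv.swap_comm a b, Equiv.swap_comm b cc]
  show Equiv.swap a b * Equiv.swap b cc * Equiv.swap a b
      = Equiv.swap b cc * Equiv.swap a b * Equiv.swap b cc
  rw [e1, Equiv.swap_mul_swap_mul_swap hbc.symm hac.symm,
    show Equiv.swap b cc * Equiv.swap a b * Equiv.swap b cc = Equiv.swap cc a from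
      Equiv.swap_mul_swap_mul_swap hab hac, Equiv.swap_comm]

/-- the projection to the symmetric group -/
noncomputable def π (nn : ℕ) : QG nn →* Equiv.Perm (Fin (nn+1)) :=
  PresentedGroup.toGroup (f := fun i : Fin nn => τ (nn+1) (i : ℕ)) (by
    rintro r (⟨i, rfl⟩ | ⟨i, j, hij, rfl⟩ | ⟨i, j, hij, rfl⟩)
    · simpa using τ_sq (nn+1) (i : ℕ)
    · simpa using sq_of_comm (τ_sq _ _) (τ_sq _ _) (τ_comm hij)
    · have hb : (i : ℕ) + 1 + 1 < nn + 1 := by omega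
      have := cube_of_braid (τ_sq (nn+1) (i : ℕ)) (τ_sq (nn+1) ((i : ℕ)+1)) (τ_braid hb)
      rw [hij] at this
      simpa using this)

lemma π_of {nn : ℕ} (i : Fin nn) : π nn (PresentedGroup.of i) = τ (nn+1) (i : ℕ) :=
  PresentedGroup.toGroup.of _

lemma π_surj (nn : ℕ) : Function.Surjective (π nn) := by
  intro σ
  have hσ : σ ∈ Submonoid.closure
      (Set.range fun i : Fin nn => Equiv.swap i.castSucc i.succ) := by
    rw [Equiv.Perm.mclosure_swap_castSucc_succ nn]; trivial
  refine Submonoid.closure_induction (motive := fun x _ => ∃ q, π nn q = x) ?_ ⟨1, map_one _⟩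
    (fun x y _ _ ⟨q₁, h₁⟩ ⟨q₂, h₂⟩ => ⟨q₁ * q₂, by rw [map_mul, h₁, h₂]⟩) hσ
  rintro x ⟨i, rfl⟩
  refine ⟨PresentedGroup.of i, ?_⟩
  rw [π_of, τ_pos (by omega)]
  unfold adjSwap
  congr 1

lemma π_bij (nn : ℕ) : Function.Bijective (π nn) := by
  obtain ⟨l, hl, hlen⟩ := covers nn
  have hfin : Finite (QG nn) := by
    refine Finite.of_surjective (fun i : Fin l.length => l.get i) (fun x => ?_)
    obtain ⟨i, hi⟩ := List.mem_iff_get.mp (hl x)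
    exact ⟨i, hi⟩
  haveI : Fintype (QG nn) := Fintype.ofFinite _
  rw [Fintype.bijective_iff_surjective_and_card]
  refine ⟨π_surj nn, le_antisymm ?_ (Fintype.card_le_of_surjective _ (π_surj nn))⟩
  calc Fintype.card (QG nn)
      ≤ Fintype.card (Fin l.length) := Fintype.card_le_of_surjective _ (fun x => by
        obtain ⟨i, hi⟩ := List.mem_iff_get.mp (hl x); exact ⟨i, hi⟩)
    _ = l.length := Fintype.card_fin _
    _ ≤ (nn+1).factorial := hlen
    _ = Fintype.card (Equiv.Perm (Fin (nn+1))) := by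
        rw [Fintype.card_perm, Fintype.card_fin]

end CayleyAux

namespace CayleyAux

abbrev SignFun (n : ℕ) := Equiv.Perm (Fin n) → ℤˣ

/-- right-translation action on sign functions -/
def rAct (n : ℕ) : Equiv.Perm (Fin n) →* MulAut (SignFun n) where
  toFun ρ :=
    { toFun := fun a x => a (x * ρ)
      invFun := fun a x => a (x * ρ⁻¹)
      left_inv := fun a => funext fun x => by simp
      right_inv := fun a => funext fun x => by simp
      map_mul' := fun a b => rfl }
  map_one' := by ext a x; simp
  map_mul' := fun ρ κ => by ext a x; simp [mul_assoc]

@[simp] lemma rAct_apply {n : ℕ} (ρ : Equiv.Perm (Fin n)) (a : SignFun n) (x : Equiv.Perm (Fin n)) :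
    rAct n ρ a x = a (x * ρ) := rfl

abbrev ZW (n : ℕ) := SemidirectProduct (SignFun n) (Equiv.Perm (Fin n)) (rAct n)

theorem coboundary (nn : ℕ) (R : Equiv.Perm (Fin (nn+1)) → ℕ → ℤˣ)
    (hRe : ∀ x i, R (x * τ (nn+1) i) i = R x i)
    (hRs : ∀ (x : Equiv.Perm (Fin (nn+1))) (i j : ℕ), i + 1 < j → j + 1 < nn + 1 →
      R x i * R (x * τ (nn+1) i) j * (R (x * τ (nn+1) j) i * R x j) = 1)
    (hRh : ∀ (x : Equiv.Perm (Fin (nn+1))) (i : ℕ), i + 1 + 1 < nn + 1 →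
      R x i * R (x * τ (nn+1) i) (i+1)
        * (R (x * τ (nn+1) i * τ (nn+1) (i+1)) i
            * R (x * τ (nn+1) i * τ (nn+1) (i+1) * τ (nn+1) i) (i+1))
        * (R (x * τ (nn+1) (i+1) * τ (nn+1) i) i * R (x * τ (nn+1) (i+1)) (i+1)) = 1) :
    ∃ f : Equiv.Perm (Fin (nn+1)) → ℤˣ,
      ∀ x i, i + 1 < nn + 1 → R x i = f x * f (x * τ (nn+1) i) := by
  -- the homomorphism into the semidirect product
  have hrel : ∀ r ∈ csRels nn, FreeGroup.lift
      (fun i : Fin nn => (⟨fun x => R x (i : ℕ), τ (nn+1) (i : ℕ)⟩ : ZW (nn+1))) r = 1 := by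
    rintro r (⟨i, rfl⟩ | ⟨i, j, hij, rfl⟩ | ⟨i, j, hij, rfl⟩)
    · simp only [map_mul, FreeGroup.lift_apply_of]
      refine SemidirectProduct.ext ?_ ?_
      · funext x
        show R x (i : ℕ) * rAct (nn+1) (τ (nn+1) (i : ℕ)) (fun y => R y (i : ℕ)) x
            = (1 : SignFun (nn+1)) x
        rw [rAct_apply]
        show R x (i : ℕ) * R (x * τ (nn+1) (i : ℕ)) (i : ℕ) = 1
        rw [hRe]
        exact Int.units_mul_self _
      · exact τ_sq (nn+1) (i : ℕ)
    · simp only [map_pow, map_mul, FreeGroup.lift_apply_of]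
      have hj : (j : ℕ) + 1 < nn + 1 := by omega
      refine SemidirectProduct.ext ?_ ?_
      · rw [pow_two]
        funext x
        simp only [SemidirectProduct.mul_left, SemidirectProduct.mul_right, rAct_apply,
          Pi.mul_apply, SemidirectProduct.one_left, Pi.one_apply]
        have e3 : x * (τ (nn+1) (i:ℕ) * τ (nn+1) (j:ℕ)) = x * τ (nn+1) (j:ℕ) * τ (nn+1) (i:ℕ) := by
          rw [τ_comm hij, ← mul_assoc]
        rw [e3, mul_assoc (x * τ (nn+1) (j:ℕ)), τ_sq, mul_one,
          hRe (x * τ (nn+1) (j:ℕ)) (i:ℕ), hRe x (j:ℕ)]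
        exact hRs x (i:ℕ) (j:ℕ) hij hj
      · rw [pow_two]
        show (τ (nn+1) (i:ℕ) * τ (nn+1) (j:ℕ)) * (τ (nn+1) (i:ℕ) * τ (nn+1) (j:ℕ))
            = (1 : ZW (nn+1)).right
        rw [← pow_two]
        exact sq_of_comm (τ_sq _ _) (τ_sq _ _) (τ_comm hij)
    · have hb : (i : ℕ) + 1 + 1 < nn + 1 := by omega
      have hij' : (j : ℕ) = (i : ℕ) + 1 := hij.symm
      simp only [map_pow, map_mul, FreeGroup.lift_apply_of]
      have hbr := τ_braid (n := nn+1) (i := (i:ℕ)) hb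
      refine SemidirectProduct.ext ?_ ?_
      · rw [pow_succ, pow_two]
        funext x
        simp only [SemidirectProduct.mul_left, SemidirectProduct.mul_right, rAct_apply,
          Pi.mul_apply, SemidirectProduct.one_left, Pi.one_apply, hij']
        set ti := τ (nn+1) (i:ℕ)
        set tj := τ (nn+1) ((i:ℕ)+1)
        have w1 : ti * tj * ti * tj = tj * ti := by
          rw [hbr, mul_assoc (tj * ti), τ_sq, mul_one]
        have w1' : ti * tj * (ti * tj) = tj * ti := by rw [← mul_assoc]; exact w1
        rw [w1', ← mul_assoc x ti tj, ← mul_assoc x tj ti,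
          mul_assoc (x * tj) ti ti, τ_sq, mul_one]
        exact hRh x (i:ℕ) hb
      · rw [hij']
        show (τ (nn+1) (i:ℕ) * τ (nn+1) ((i:ℕ)+1))^3 = (1 : ZW (nn+1)).right
        exact cube_of_braid (τ_sq _ _) (τ_sq _ _) hbr
  set ψ := PresentedGroup.toGroup hrel with hψ
  have hre : ∀ q, (ψ q).right = π nn q := by
    have hcomp : SemidirectProduct.rightHom.comp ψ = π nn := by
      refine PresentedGroup.ext fun i => ?_
      rw [MonoidHom.comp_apply, π_of]
      show (ψ (PresentedGroup.of i)).right = τ (nn+1) (i : ℕ)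
      rw [hψ, PresentedGroup.toGroup.of]
    intro q
    exact DFunLike.congr_fun hcomp q
  have hπ := π_bij nn
  set e := Equiv.ofBijective _ hπ with he
  have heq : ∀ q, π nn q = e q := fun q => rfl
  refine ⟨fun σ => (ψ (e.symm σ)).left 1, fun x i hi => ?_⟩
  have hi' : i < nn := by omega
  have hsy : e.symm (x * τ (nn+1) i) = e.symm x * PresentedGroup.of ⟨i, hi'⟩ := by
    apply e.injective
    rw [Equiv.apply_symm_apply, ← heq, map_mul, π_of]
    show x * τ (nn+1) i = π nn (e.symm x) * τ (nn+1) i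
    rw [heq, Equiv.apply_symm_apply]
  have key : (ψ (e.symm (x * τ (nn+1) i))).left 1
      = (ψ (e.symm x)).left 1 * R x i := by
    rw [hsy, map_mul]
    rw [SemidirectProduct.mul_left, Pi.mul_apply, rAct_apply, one_mul]
    congr 1
    have hofi : ψ (PresentedGroup.of ⟨i, hi'⟩) =
        (⟨fun x => R x i, τ (nn+1) i⟩ : ZW (nn+1)) := by
      rw [hψ]; exact PresentedGroup.toGroup.of hrel
    rw [hofi]
    show R ((ψ (e.symm x)).right) i = R x i
    rw [hre, heq, Equiv.apply_symm_apply]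
  show R x i = (ψ (e.symm x)).left 1 * (ψ (e.symm (x * τ (nn+1) i))).left 1
  rw [key, ← mul_assoc, Int.units_mul_self, one_mul]

end CayleyAux

/-- Any two sign assignments on the Cayley graph of `S_n` are gauge equivalent: there
is a function `f : S_n → {±1}` with `S₁(e) = f(σ)·f(σ')·S₂(e)` for every edge `e`
joining `σ` and `σ' = σ·τ_i`. -/
theorem cayleySign_unique (n : ℕ)
    (S₁ S₂ : Equiv.Perm (Fin n) → (i : ℕ) → i + 1 < n → ℤˣ)
    (h₁ : IsCayleySign n S₁) (h₂ : IsCayleySign n S₂) :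
    ∃ f : Equiv.Perm (Fin n) → ℤˣ,
      ∀ (σ : Equiv.Perm (Fin n)) (i : ℕ) (hi : i + 1 < n),
        S₁ σ i hi = f σ * f (σ * adjSwap n i hi) * S₂ σ i hi := by
  cases n with
  | zero => exact ⟨fun _ => 1, fun σ i hi => absurd hi (by omega)⟩
  | succ nn =>
    obtain ⟨f, hf⟩ := CayleyAux.coboundary nn
      (fun x i => if h : i + 1 < nn + 1 then S₁ x i h * S₂ x i h else 1)
      (by
        intro x i
        by_cases h : i + 1 < nn + 1
        · simp only [CayleyAux.τ_pos h, dif_pos h]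
          rw [h₁.1, h₂.1]
        · simp only [dif_neg h])
      (by
        intro x i j hij hj
        have hi : i + 1 < nn + 1 := by omega
        simp only [CayleyAux.τ_pos hi, CayleyAux.τ_pos hj, dif_pos hi, dif_pos hj]
        have a := congrArg Units.val (h₁.2.1 x i j hi hj hij)
        have b := congrArg Units.val (h₂.2.1 x i j hi hj hij)
        simp only [Units.val_mul, Units.val_neg, Units.val_one] at a b
        rw [← Units.val_inj]
        simp only [Units.val_mul, Units.val_one]
        linear_combination (((S₂ x i hi : ℤˣ) : ℤ)
          * ((S₂ (x * adjSwap (nn+1) i hi) j hj : ℤˣ) : ℤ)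
          * ((S₂ (x * adjSwap (nn+1) j hj) i hi : ℤˣ) : ℤ)
          * ((S₂ x j hj : ℤˣ) : ℤ)) * a - b)
      (by
        intro x i hb
        have hi : i + 1 < nn + 1 := by omega
        simp only [CayleyAux.τ_pos hi, CayleyAux.τ_pos hb, dif_pos hi, dif_pos hb]
        have a := congrArg Units.val (h₁.2.2 x i hb)
        have b := congrArg Units.val (h₂.2.2 x i hb)
        simp only [Units.val_mul, Units.val_neg, Units.val_one] at a b
        rw [← Units.val_inj]
        simp only [Units.val_mul, Units.val_one]
        linear_combination (((S₂ x i hi : ℤˣ) : ℤ)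
          * ((S₂ (x * adjSwap (nn+1) i hi) (i+1) hb : ℤˣ) : ℤ)
          * ((S₂ (x * adjSwap (nn+1) i hi * adjSwap (nn+1) (i+1) hb) i hi : ℤˣ) : ℤ)
          * ((S₂ (x * adjSwap (nn+1) i hi * adjSwap (nn+1) (i+1) hb
              * adjSwap (nn+1) i hi) (i+1) hb : ℤˣ) : ℤ)
          * ((S₂ (x * adjSwap (nn+1) (i+1) hb * adjSwap (nn+1) i hi) i hi : ℤˣ) : ℤ)
          * ((S₂ (x * adjSwap (nn+1) (i+1) hb) (i+1) hb : ℤˣ) : ℤ)) * a + b)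
    refine ⟨f, fun σ i hi => ?_⟩
    have hfi := hf σ i hi
    rw [CayleyAux.τ_pos hi] at hfi
    simp only [dif_pos hi] at hfi
    rw [← hfi, mul_assoc, Int.units_mul_self, mul_one]
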